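/- Let v > k ≥ 1 with 2k > v. Then μ(1,k,v) = ⌈C(v,2)/(v−k)⌉. -/

import Mathlib

open Finset

/-- Frequency of a subset `T` in a multiset of blocks `A`: total multiplicity of
blocks containing `T`. -/
def freq (A : Multiset (Finset ℕ)) (T : Finset ℕ) : ℕ :=
  Multiset.card (A.filter (fun K => T ⊆ K))

/-- A `t`-adesign `A(t,k,v)`: a multiset of `k`-subsets of `{0,...,v-1}` in which
all `t`-subsets have pairwise distinct frequencies. -/
def IsAdesign (t k v : ℕ) (A : Multiset (Finset ℕ)) : Prop :=
  (∀ K ∈ A, K ⊆ Finset.range v ∧ K.card = k) ∧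
  ∀ T₁ ∈ (Finset.range v).powersetCard t, ∀ T₂ ∈ (Finset.range v).powersetCard t,
    freq A T₁ = freq A T₂ → T₁ = T₂

/-- `mu t k v`: the smallest possible maximum `t`-subset frequency over all
`t`-adesigns `A(t,k,v)`. -/
noncomputable def mu (t k v : ℕ) : ℕ :=
  sInf {m | ∃ A, IsAdesign t k v A ∧ ∀ T ∈ (Finset.range v).powersetCard t, freq A T ≤ m}

lemma sum_range_card_le : ∀ (n : ℕ) (s : Finset ℕ), s.card = n →
    ∑ i ∈ range n, i ≤ ∑ x ∈ s, x := by
  intro n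
  induction n with
  | zero => simp
  | succ n ih =>
    intro s hs
    have hne : s.Nonempty := by rw [← Finset.card_pos, hs]; omega
    set M := s.max' hne with hMdef
    have hM : ∀ x ∈ s, x ≤ M := fun x hx => Finset.le_max' s x hx
    have hsub : s ⊆ range (M + 1) := fun x hx => mem_range.2 (Nat.lt_succ_of_le (hM x hx))
    have hcard : n + 1 ≤ M + 1 := by
      calc n + 1 = s.card := hs.symm
        _ ≤ (range (M + 1)).card := Finset.card_le_card hsub
        _ = M + 1 := by simp
    have hMmem : M ∈ s := s.max'_mem hne
    have herase : (s.erase M).card = n := by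
      rw [Finset.card_erase_of_mem hMmem, hs]
      omega
    have h2 := ih (s.erase M) herase
    have hsum : ∑ x ∈ s, x = M + ∑ x ∈ s.erase M, x := by
      exact (Finset.add_sum_erase s id hMmem).symm
    rw [Finset.sum_range_succ, hsum]
    omega

def Spos (f : ℕ → ℕ) (i : ℕ) : ℕ := ∑ l ∈ range i, f l

def Bl (m v : ℕ) (f : ℕ → ℕ) (j : ℕ) : Finset ℕ :=
  (range v).filter (fun i => (j + m - Spos f i % m) % m < f i)

lemma mod_shift_left' {m c : ℕ} (hc : c < m) {j : ℕ} (hj : j < m) :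
    ((j + m - c) % m + c) % m = j := by
  have h1 : j + m - c = j + (m - c) := by omega
  rw [h1, Nat.mod_add_mod, add_assoc, Nat.sub_add_cancel hc.le, Nat.add_mod_right,
    Nat.mod_eq_of_lt hj]

lemma mod_shift_right' {m c : ℕ} (hc : c < m) {t : ℕ} (ht : t < m) :
    ((t + c) % m + m - c) % m = t := by
  have h1 : (t + c) % m + m - c = (t + c) % m + (m - c) := by
    have := Nat.mod_lt (t + c) (show 0 < m by omega)
    omega
  rw [h1, Nat.mod_add_mod, add_assoc, Nat.add_sub_cancel' hc.le, Nat.add_mod_right,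
    Nat.mod_eq_of_lt ht]

lemma existsBetweenS' (S : ℕ → ℕ) : ∀ (n p : ℕ), S 0 ≤ p → p < S n →
    ∃ i < n, S i ≤ p ∧ p < S (i + 1) := by
  intro n
  induction n with
  | zero => intro p h0 h; omega
  | succ n ih =>
    intro p h0 h
    by_cases hc : S n ≤ p
    · exact ⟨n, Nat.lt_succ_self n, hc, h⟩
    · obtain ⟨i, hi, h1, h2⟩ := ih p h0 (by omega)
      exact ⟨i, by omega, h1, h2⟩

lemma freq_Bl (m v : ℕ) (f : ℕ → ℕ) (hm : 0 < m) (i : ℕ) (hiv : i < v) (hfi : f i ≤ m) :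
    ((range m).filter (fun j => i ∈ Bl m v f j)).card = f i := by
  have hmem : ∀ j, i ∈ Bl m v f j ↔ (j + m - Spos f i % m) % m < f i := by
    intro j
    simp [Bl, hiv]
  set c := Spos f i % m with hcdef
  have hc : c < m := Nat.mod_lt _ hm
  have key : ((range m).filter (fun j => i ∈ Bl m v f j)).card = (range (f i)).card := by
    apply Finset.card_nbij' (fun j => (j + m - c) % m) (fun t => (t + c) % m)
    · intro j hj
      rw [Finset.mem_coe, Finset.mem_filter] at hj
      rw [Finset.mem_coe, Finset.mem_range]
      exact (hmem j).1 hj.2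
    · intro t ht
      rw [Finset.mem_coe, Finset.mem_range] at ht
      rw [Finset.mem_coe, Finset.mem_filter, Finset.mem_range]
      refine ⟨Nat.mod_lt _ hm, (hmem _).2 ?_⟩
      rw [mod_shift_right' hc (lt_of_lt_of_le ht hfi)]
      exact ht
    · intro j hj
      rw [Finset.mem_coe, Finset.mem_filter, Finset.mem_range] at hj
      exact mod_shift_left' hc hj.1
    · intro t ht
      rw [Finset.mem_coe, Finset.mem_range] at ht
      exact mod_shift_right' hc (lt_of_lt_of_le ht hfi)
  rw [key, Finset.card_range]

lemma card_Bl (m v k : ℕ) (f : ℕ → ℕ) (hm : 0 < m)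
    (hfm : ∀ i < v, f i ≤ m) (hsum : Spos f v = m * k)
    (j : ℕ) (hj : j < m) : (Bl m v f j).card = k := by
  have hS0 : Spos f 0 = 0 := by simp [Spos]
  have hSsucc : ∀ i, Spos f (i + 1) = Spos f i + f i := fun i => Finset.sum_range_succ f i
  have hSmono : ∀ a b, a ≤ b → Spos f a ≤ Spos f b := by
    intro a b hab
    exact Finset.sum_le_sum_of_subset (Finset.range_subset_range.2 hab)
  have step1 : (Bl m v f j).card = ((range (m * k)).filter (fun p => p % m = j)).card := by
    apply Finset.card_bij (fun i _ => Spos f i + (j + m - Spos f i % m) % m)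
    · intro a ha
      rw [Bl, Finset.mem_filter, Finset.mem_range] at ha
      obtain ⟨hav, hta⟩ := ha
      set c := Spos f a % m with hcdef
      have hc : c < m := Nat.mod_lt _ hm
      set t := (j + m - c) % m with htdef
      rw [Finset.mem_filter, Finset.mem_range]
      constructor
      · calc Spos f a + t < Spos f a + f a := by omega
          _ = Spos f (a + 1) := (hSsucc a).symm
          _ ≤ Spos f v := hSmono _ _ hav
          _ = m * k := hsum
      · have ht : t < m := Nat.mod_lt _ hm
        calc (Spos f a + t) % m = (Spos f a % m + t) % m := by rw [Nat.mod_add_mod]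
          _ = (t + c) % m := by rw [add_comm, hcdef]
          _ = ((j + m - c) % m + c) % m := by rw [htdef]
          _ = j := mod_shift_left' hc hj
    · intro a1 h1 a2 h2 heq
      rw [Bl, Finset.mem_filter, Finset.mem_range] at h1 h2
      by_contra hne
      rcases Nat.lt_or_ge a1 a2 with hlt | hge
      · have : Spos f a1 + (j + m - Spos f a1 % m) % m < Spos f a2 := by
          calc Spos f a1 + (j + m - Spos f a1 % m) % m < Spos f a1 + f a1 := by omega
            _ = Spos f (a1 + 1) := (hSsucc a1).symm
            _ ≤ Spos f a2 := hSmono _ _ hlt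
        omega
      · have hlt2 : a2 < a1 := by omega
        have : Spos f a2 + (j + m - Spos f a2 % m) % m < Spos f a1 := by
          calc Spos f a2 + (j + m - Spos f a2 % m) % m < Spos f a2 + f a2 := by omega
            _ = Spos f (a2 + 1) := (hSsucc a2).symm
            _ ≤ Spos f a1 := hSmono _ _ hlt2
        omega
    · intro p hp
      rw [Finset.mem_filter, Finset.mem_range] at hp
      obtain ⟨hpk, hpj⟩ := hp
      obtain ⟨i, hiv, h1, h2⟩ := existsBetweenS' (Spos f) v p (by omega) (by omega)
      rw [hSsucc i] at h2
      set c := Spos f i % m with hcdef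
      have hc : c < m := Nat.mod_lt _ hm
      set t0 := p - Spos f i with ht0def
      have ht0 : t0 < f i := by omega
      have ht0m : t0 < m := lt_of_lt_of_le ht0 (hfm i hiv)
      have hkey : (t0 + c) % m = j := by
        calc (t0 + c) % m = (t0 + Spos f i) % m := by
              rw [hcdef, Nat.add_mod_mod]
          _ = p % m := by congr 1; omega
          _ = j := hpj
      have hkey2 : (j + m - c) % m = t0 := by
        rw [← hkey]
        exact mod_shift_right' hc ht0m
      refine ⟨i, ?_, ?_⟩
      · rw [Bl, Finset.mem_filter, Finset.mem_range]
        exact ⟨hiv, by rw [hkey2]; exact ht0⟩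
      · rw [hkey2]; omega
  have step2 : ((range (m * k)).filter (fun p => p % m = j)).card = (range k).card := by
    apply Finset.card_nbij' (fun p => p / m) (fun t => m * t + j)
    · intro p hp
      rw [Finset.mem_coe, Finset.mem_filter, Finset.mem_range] at hp
      rw [Finset.mem_coe, Finset.mem_range]
      rw [Nat.div_lt_iff_lt_mul hm, Nat.mul_comm]
      exact hp.1
    · intro t ht
      rw [Finset.mem_coe, Finset.mem_range] at ht
      rw [Finset.mem_coe, Finset.mem_filter, Finset.mem_range]
      constructor
      · calc m * t + j < m * t + m := by omega
          _ = m * (t + 1) := by ring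
          _ ≤ m * k := Nat.mul_le_mul_left m ht
      · rw [Nat.mul_add_mod, Nat.mod_eq_of_lt hj]
    · intro p hp
      rw [Finset.mem_coe, Finset.mem_filter, Finset.mem_range] at hp
      rw [← hp.2]
      exact Nat.div_add_mod p m
    · intro t ht
      rw [Finset.mem_coe, Finset.mem_range] at ht
      show (m * t + j) / m = t
      rw [Nat.mul_add_div hm, Nat.div_eq_of_lt hj]
      omega
  rw [step1, step2, Finset.card_range]

lemma freq_map (m : ℕ) (B : ℕ → Finset ℕ) (x : ℕ) :
    freq ((Multiset.range m).map B) {x} = ((range m).filter (fun j => {x} ⊆ B j)).card := by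
  unfold freq
  rw [← Multiset.countP_eq_card_filter, Multiset.countP_map]
  rfl

lemma sum_freq (k v : ℕ) (A : Multiset (Finset ℕ))
    (hA : ∀ K ∈ A, K ⊆ range v ∧ K.card = k) :
    ∑ x ∈ range v, freq A {x} = Multiset.card A * k := by
  induction A using Multiset.induction with
  | empty => simp [freq]
  | cons K A ih =>
    have hK := hA K (Multiset.mem_cons_self K A)
    have hA' : ∀ K' ∈ A, K' ⊆ range v ∧ K'.card = k := fun K' h =>
      hA K' (Multiset.mem_cons_of_mem h)
    have hfreq : ∀ x, freq (K ::ₘ A) {x} = (if x ∈ K then 1 else 0) + freq A {x} := by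
      intro x
      unfold freq
      by_cases hx : x ∈ K
      · rw [Multiset.filter_cons_of_pos _ (by simpa using hx)]
        simp [hx, Nat.add_comm]
      · rw [Multiset.filter_cons_of_neg _ (by simpa using hx)]
        simp [hx]
    rw [Finset.sum_congr rfl (fun x _ => hfreq x), Finset.sum_add_distrib, ih hA']
    have hind : ∑ x ∈ range v, (if x ∈ K then 1 else 0) = K.card := by
      rw [Finset.sum_ite_mem, Finset.sum_const, smul_eq_mul, mul_one,
        Finset.inter_eq_right.2 hK.1]
    rw [hind, Multiset.card_cons, hK.2]
    ring

theorem stmt5 (k v : ℕ) (hk : 1 ≤ k) (hkv : k < v) (h2k : v < 2 * k) :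
    mu 1 k v = v.choose 2 ⌈/⌉ (v - k) := by
  have hv2 : 2 ≤ v := by omega
  set d := v - k with hddef
  have hd0 : 0 < d := by omega
  set C := v.choose 2 with hCdef
  have hCv : 2 * C = v * (v - 1) := by
    rw [hCdef, Nat.choose_two_right]
    have h2dvd : 2 ∣ v * (v - 1) := by
      rcases Nat.even_or_odd v with h | h
      · exact Dvd.dvd.mul_right h.two_dvd _
      · have : Even (v - 1) := by
          rcases h with ⟨c, hc⟩
          exact ⟨c, by omega⟩
        exact Dvd.dvd.mul_left this.two_dvd _
    exact (Nat.mul_div_cancel' h2dvd)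
  set m := C ⌈/⌉ d with hmdef
  have hCle : C ≤ d * m := (ceilDiv_le_iff_le_mul hd0).1 (le_refl m)
  have hmv : v ≤ m := by
    have h2d : 2 * d ≤ v - 1 := by omega
    have h1 : v * (v - 1) ≤ m * (v - 1) := by
      calc v * (v - 1) = 2 * C := hCv.symm
        _ ≤ 2 * (d * m) := by omega
        _ = (2 * d) * m := by ring
        _ ≤ (v - 1) * m := Nat.mul_le_mul_right m h2d
        _ = m * (v - 1) := Nat.mul_comm _ _
    exact Nat.le_of_mul_le_mul_right h1 (by omega)
  have hm0 : 0 < m := by omega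
  have hrlt : d * m < C + d := by
    by_contra hcon
    push_neg at hcon
    have hstep : d * (m - 1) + d = d * m := by
      rw [← Nat.mul_succ]
      congr 1
      omega
    have hCle' : C ≤ d * (m - 1) := by omega
    have := (ceilDiv_le_iff_le_mul hd0).2 hCle'
    omega
  set r := d * m - C with hrdef
  have hrd : r < d := by omega
  have hCr : C + r = d * m := by omega
  clear_value d C m r
  set f := fun i => m - i - (if v - r ≤ i then 1 else 0) with hfdef
  have hfm : ∀ i < v, f i ≤ m := by
    intro i hi
    simp only [hfdef]
    split_ifs <;> omega
  have hfinj : ∀ a < v, ∀ b < v, f a = f b → a = b := by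
    intro a ha b hb h
    simp only [hfdef] at h
    split_ifs at h <;> omega
  have hgauss : ∑ i ∈ range v, i = C := by
    have := Finset.sum_range_id_mul_two v
    omega
  have hsum : Spos f v = m * k := by
    have hsum1 : ∀ i ∈ range v, f i + i + (if v - r ≤ i then 1 else 0) = m := by
      intro i hi
      rw [Finset.mem_range] at hi
      simp only [hfdef]
      split_ifs <;> omega
    have hite : ∑ i ∈ range v, (if v - r ≤ i then (1:ℕ) else 0) = r := by
      rw [Finset.sum_ite, Finset.sum_const, Finset.sum_const, smul_eq_mul, smul_eq_mul,
        mul_one, mul_zero, add_zero]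
      have heq : (range v).filter (fun i => v - r ≤ i) = Finset.Ico (v - r) v := by
        ext x
        simp only [Finset.mem_filter, Finset.mem_range, Finset.mem_Ico]
        omega
      rw [heq, Nat.card_Ico]
      omega
    have htotal : ∑ i ∈ range v, (f i + i + (if v - r ≤ i then 1 else 0)) = m * v := by
      rw [Finset.sum_congr rfl hsum1, Finset.sum_const, smul_eq_mul, Finset.card_range]
      ring
    rw [Finset.sum_add_distrib, Finset.sum_add_distrib, hgauss, hite] at htotal
    have hmv2 : m * v = m * k + d * m := by
      rw [show v = k + d by omega, Nat.mul_add, Nat.mul_comm m d]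
    show ∑ l ∈ range v, f l = m * k
    omega
  set A : Multiset (Finset ℕ) := (Multiset.range m).map (Bl m v f) with hAdef
  have hAblocks : ∀ K ∈ A, K ⊆ Finset.range v ∧ K.card = k := by
    intro K hK
    rw [hAdef, Multiset.mem_map] at hK
    obtain ⟨j, hj, rfl⟩ := hK
    rw [Multiset.mem_range] at hj
    exact ⟨Finset.filter_subset _ _, card_Bl m v k f hm0 hfm hsum j hj⟩
  have hsinglemem : ∀ x < v, ({x} : Finset ℕ) ∈ (Finset.range v).powersetCard 1 :=
    fun x hx => Finset.mem_powersetCard.2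
      ⟨Finset.singleton_subset_iff.2 (Finset.mem_range.2 hx), Finset.card_singleton x⟩
  have hfreqA : ∀ x < v, freq A {x} = f x := by
    intro x hx
    rw [hAdef, freq_map]
    have heq : (range m).filter (fun j => {x} ⊆ Bl m v f j)
        = (range m).filter (fun j => x ∈ Bl m v f j) := by
      apply Finset.filter_congr
      intro j _
      simp [Finset.singleton_subset_iff]
    rw [heq]
    exact freq_Bl m v f hm0 x hx (hfm x hx)
  have hAdesign : IsAdesign 1 k v A := by
    refine ⟨hAblocks, ?_⟩
    intro T₁ hT₁ T₂ hT₂ hfr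
    rw [Finset.mem_powersetCard] at hT₁ hT₂
    obtain ⟨x, rfl⟩ := Finset.card_eq_one.1 hT₁.2
    obtain ⟨y, rfl⟩ := Finset.card_eq_one.1 hT₂.2
    have hx : x < v := by
      have := hT₁.1 (Finset.mem_singleton_self x)
      rwa [Finset.mem_range] at this
    have hy : y < v := by
      have := hT₂.1 (Finset.mem_singleton_self y)
      rwa [Finset.mem_range] at this
    rw [hfreqA x hx, hfreqA y hy] at hfr
    rw [hfinj x hx y hy hfr]
  have hmem : m ∈ {n | ∃ A, IsAdesign 1 k v A ∧
      ∀ T ∈ (Finset.range v).powersetCard 1, freq A T ≤ n} := by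
    refine ⟨A, hAdesign, ?_⟩
    intro T hT
    rw [Finset.mem_powersetCard] at hT
    obtain ⟨x, rfl⟩ := Finset.card_eq_one.1 hT.2
    have hx : x < v := by
      have := hT.1 (Finset.mem_singleton_self x)
      rwa [Finset.mem_range] at this
    rw [hfreqA x hx]
    exact hfm x hx
  have hlow : ∀ m' ∈ {n | ∃ A, IsAdesign 1 k v A ∧
      ∀ T ∈ (Finset.range v).powersetCard 1, freq A T ≤ n}, m ≤ m' := by
    rintro m' ⟨A', hA', hb⟩
    set F := fun x => freq A' {x} with hFdef
    set b := Multiset.card A' with hbdef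
    have hsumF : ∑ x ∈ range v, F x = b * k := sum_freq k v A' hA'.1
    have hinj : ∀ x < v, ∀ y < v, F x = F y → x = y := by
      intro x hx y hy h
      have := hA'.2 {x} (hsinglemem x hx) {y} (hsinglemem y hy) h
      exact Finset.singleton_injective this
    have hne : ((range v).image F).Nonempty :=
      Finset.Nonempty.image ⟨0, Finset.mem_range.2 (by omega)⟩ F
    set M := ((range v).image F).max' hne with hMdef
    obtain ⟨x₀, hx₀v, hx₀⟩ := Finset.mem_image.1 (((range v).image F).max'_mem hne)
    rw [Finset.mem_range] at hx₀v
    rw [← hMdef] at hx₀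
    have hFM : ∀ x ∈ range v, F x ≤ M := fun x hx =>
      Finset.le_max' _ _ (Finset.mem_image_of_mem F hx)
    have hMb : M ≤ b := by
      rw [← hx₀, hbdef]
      exact Multiset.card_le_card (Multiset.filter_le _ _)
    have hMm' : M ≤ m' := by
      rw [← hx₀]
      exact hb {x₀} (hsinglemem x₀ hx₀v)
    clear_value F b M
    have hcomp : ∑ x ∈ range v, (M - F x) + ∑ x ∈ range v, F x = M * v := by
      rw [← Finset.sum_add_distrib]
      rw [Finset.sum_congr rfl (fun x hx => (by have := hFM x hx; omega : M - F x + F x = M))]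
      rw [Finset.sum_const, smul_eq_mul, Finset.card_range]
      ring
    have hinj' : ∀ x ∈ range v, ∀ y ∈ range v, M - F x = M - F y → x = y := by
      intro x hx y hy h
      have h1 := hFM x hx
      have h2 := hFM y hy
      rw [Finset.mem_range] at hx hy
      exact hinj x hx y hy (by omega)
    have hcard' : ((range v).image (fun x => M - F x)).card = v := by
      rw [Finset.card_image_of_injOn, Finset.card_range]
      intro x hx y hy h
      exact hinj' x (by simpa using hx) y (by simpa using hy) h
    have hsum2 : C ≤ ∑ x ∈ range v, (M - F x) := by
      have h1 : ∑ y ∈ (range v).image (fun x => M - F x), y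
          = ∑ x ∈ range v, (M - F x) := Finset.sum_image hinj'
      have h2 := sum_range_card_le (((range v).image (fun x => M - F x)).card)
        ((range v).image (fun x => M - F x)) rfl
      rw [hcard', hgauss] at h2
      simpa [h1] using h2
    have hMk : M * k ≤ b * k := Nat.mul_le_mul_right k hMb
    have hMv2 : M * v = M * k + M * d := by
      rw [show v = k + d by omega, Nat.mul_add]
    have hCdM : C ≤ d * M := by
      have h : C ≤ M * d := by omega
      rw [Nat.mul_comm]
      exact h
    have hceil : m ≤ M := by
      rw [hmdef]
      exact (ceilDiv_le_iff_le_mul hd0).2 hCdM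
    exact le_trans hceil hMm'
  show mu 1 k v = m
  unfold mu
  exact le_antisymm (Nat.sInf_le hmem) (le_csInf ⟨m, hmem⟩ hlow)
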